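/- Let m ≥ 1, let w_1,…,w_m be positive integers with gcd(w_1,…,w_m) = 1, and let k_1,…,k_m be positive integers such that w_{j₀}·k_{j₀} is odd for some index j₀. Suppose λ ∈ ℂ with |λ| = 1 is such that for every j there exists an invertible k_j×k_j complex matrix A_j with A_j·Ā_j = λ^{w_j}·I_{k_j}. Then λ = 1. -/

import Mathlib

/-- let `w₁,…,w_m` be positive integers with `gcd(w₁,…,w_m) = 1` and
`k₁,…,k_m` positive integers with `w_{j₀}·k_{j₀}` odd for some `j₀`. If `λ ∈ ℂ` with
`|λ| = 1` is such that for every `j` there is an invertible `k_j×k_j` complex matrix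
`A_j` with `A_j·Ā_j = λ^{w_j}·I_{k_j}`, then `λ = 1`. -/
lemma pow_finset_gcd_eq_one {ι : Type*} [DecidableEq ι] (s : Finset ι) (f : ι → ℕ) (x : ℂ)
    (hx : ∀ i ∈ s, x ^ f i = 1) : x ^ s.gcd f = 1 := by
  induction s using Finset.induction with
  | empty => simp
  | insert _ _ ha ih =>
    rw [Finset.gcd_insert]
    exact pow_gcd_eq_one.mpr ⟨hx _ (Finset.mem_insert_self _ _),
      ih fun i hi => hx i (Finset.mem_insert_of_mem hi)⟩

lemma matrix_key {n : ℕ} (hn : 0 < n) (μ : ℂ) (A : Matrix (Fin n) (Fin n) ℂ)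
    (hA : IsUnit A) (hAA : A * A.map (starRingEnd ℂ) = μ • 1) :
    (starRingEnd ℂ) μ = μ ∧ μ ^ n = (Complex.normSq A.det : ℂ) := by
  have hdu : IsUnit A.det := (Matrix.isUnit_iff_isUnit_det A).mp hA
  constructor
  · have h1 : A.map (starRingEnd ℂ) * A = (starRingEnd ℂ) μ • 1 := by
      have h0 := congrArg (Matrix.map · (starRingEnd ℂ)) hAA
      simp only [Matrix.map_mul, Matrix.map_map] at h0
      have hcc : ((starRingEnd ℂ) : ℂ → ℂ) ∘ (starRingEnd ℂ) = id := by
        funext z; simp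
      have hm : (μ • (1 : Matrix (Fin n) (Fin n) ℂ)).map (starRingEnd ℂ)
          = (starRingEnd ℂ) μ • 1 := by
        ext i j
        by_cases hij : i = j <;>
          simp [Matrix.map_apply, Matrix.smul_apply, Matrix.one_apply, hij]
      rw [hcc, Matrix.map_id, hm] at h0
      exact h0
    have h2 : A.map (starRingEnd ℂ) * A = μ • 1 := by
      have hB : A.map (starRingEnd ℂ) = A⁻¹ * (μ • 1) := by
        rw [← hAA, ← mul_assoc, Matrix.nonsing_inv_mul A hdu, one_mul]
      rw [hB, mul_assoc, smul_mul_assoc, one_mul, mul_smul_comm,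
        Matrix.nonsing_inv_mul A hdu]
    have h3 := h1.symm.trans h2
    have h4 := congrFun (congrFun h3 ⟨0, hn⟩) ⟨0, hn⟩
    simpa [Matrix.smul_apply, Matrix.one_apply] using h4
  · have hdet := congrArg Matrix.det hAA
    rw [Matrix.det_mul, Matrix.det_smul, Matrix.det_one, mul_one,
      ← RingHom.mapMatrix_apply, ← RingHom.map_det] at hdet
    simp only [Fintype.card_fin] at hdet
    rw [← hdet, Complex.mul_conj]

theorem lambda_eq_one_of_odd_weight_times_mult (m : ℕ) (hm : 1 ≤ m)
    (w k : Fin m → ℕ) (hw : ∀ j, 0 < w j) (hk : ∀ j, 0 < k j)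
    (hgcd : Finset.univ.gcd w = 1) (j₀ : Fin m) (hodd : Odd (w j₀ * k j₀))
    (lam : ℂ) (hlam : ‖lam‖ = 1)
    (h : ∀ j, ∃ A : Matrix (Fin (k j)) (Fin (k j)) ℂ, IsUnit A ∧
        A * A.map (starRingEnd ℂ) =
          (lam ^ (w j)) • (1 : Matrix (Fin (k j)) (Fin (k j)) ℂ)) :
    lam = 1 := by
  obtain ⟨hwodd, hkodd⟩ := (Nat.odd_mul).mp hodd
  -- each lam ^ w j is real, hence (lam^2)^(w j) = 1
  have key : ∀ j, (starRingEnd ℂ) (lam ^ w j) = lam ^ w j ∧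
      (lam ^ w j) ^ (k j) = (Complex.normSq (Classical.choose (h j)).det : ℂ) := by
    intro j
    obtain ⟨hA, hAA⟩ := Classical.choose_spec (h j)
    exact matrix_key (hk j) _ _ hA hAA
  have habs : ∀ j, ‖lam ^ w j‖ = 1 := by
    intro j; rw [norm_pow, hlam, one_pow]
  have hsq : ∀ j, (lam ^ 2) ^ (w j) = 1 := by
    intro j
    have h1 : (lam ^ w j) * (lam ^ w j) = 1 := by
      have hmc := Complex.mul_conj (lam ^ w j)
      rw [(key j).1] at hmc
      rw [hmc, Complex.normSq_eq_norm_sq, habs j]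
      norm_num
    calc (lam ^ 2) ^ (w j) = (lam ^ w j) * (lam ^ w j) := by ring
    _ = 1 := h1
  have hlam2 : lam ^ 2 = 1 := by
    have := pow_finset_gcd_eq_one Finset.univ w (lam ^ 2) (fun i _ => hsq i)
    rwa [hgcd, pow_one] at this
  -- rule out lam ^ w j₀ = -1 using determinant positivity
  have hmu : lam ^ w j₀ = 1 := by
    have hμ2 : (lam ^ w j₀) * (lam ^ w j₀) = 1 := by
      calc (lam ^ w j₀) * (lam ^ w j₀) = (lam ^ 2) ^ (w j₀) := by ring
      _ = 1 := by rw [hlam2, one_pow]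
    rcases mul_self_eq_one_iff.mp hμ2 with h1 | h1
    · exact h1
    · exfalso
      have hμk : ((-1 : ℂ)) ^ (k j₀) = (Complex.normSq (Classical.choose (h j₀)).det : ℂ) := by
        rw [← h1]; exact (key j₀).2
      rw [hkodd.neg_one_pow] at hμk
      have : (Complex.normSq (Classical.choose (h j₀)).det : ℝ) = -1 := by
        exact_mod_cast hμk.symm
      nlinarith [Complex.normSq_nonneg (Classical.choose (h j₀)).det]
  rcases mul_self_eq_one_iff.mp (by calc lam * lam = lam ^ 2 := by ring
    _ = 1 := hlam2) with h1 | h1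
  · exact h1
  · exfalso
    rw [h1, hwodd.neg_one_pow] at hmu
    norm_num at hmu
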